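/- Let K be the triangular kernel K(u) = 4·min(u, 1−u) for u ∈ [0,1] and K(u) = 0 otherwise. Let m ≥ 1 be an integer, h = 1/m, let c > 0, R > 0, β ∈ (0,1], let a > 0, let p ≥ 1 be an integer, and let θ = (θ_1, …, θ_m) ∈ {0,1}^m. Define g_θ : [0,1] → ℝ by g_θ(x) = Σ_{k=1}^m θ_k · cR h^β K((x − (k−1)h)/h). Then ∫_0^1 (a + g_θ(x))^p dx − a^p = (Σ_{k=1}^m θ_k) · Σ_{j=1}^p binom(p, j) · a^{p−j} · (cR)^j · h^{βj+1} · 2^j/(j+1). -/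
import Mathlib
open MeasureTheory

noncomputable def triKernel (u : ℝ) : ℝ :=
  if u ∈ Set.Icc (0:ℝ) 1 then 4 * min u (1 - u) else 0

lemma triKernel_eq (u : ℝ) : triKernel u = 4 * max (min u (1 - u)) 0 := by
  unfold triKernel
  split_ifs with h
  · rw [max_eq_left]
    exact le_min h.1 (by linarith [h.2])
  · rw [max_eq_right, mul_zero]
    simp only [Set.mem_Icc, not_and, not_le] at h
    rcases le_or_gt 0 u with h0 | h0
    · exact min_le_of_right_le (by linarith [h h0])
    · exact min_le_of_left_le h0.le

lemma triKernel_continuous : Continuous triKernel := by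
  have : triKernel = fun u => 4 * max (min u (1 - u)) 0 := funext triKernel_eq
  rw [this]; fun_prop

lemma triKernel_of_nonpos {u : ℝ} (h : u ≤ 0) : triKernel u = 0 := by
  rw [triKernel_eq, max_eq_right, mul_zero]
  exact min_le_of_left_le h

lemma triKernel_of_one_le {u : ℝ} (h : 1 ≤ u) : triKernel u = 0 := by
  rw [triKernel_eq, max_eq_right, mul_zero]
  exact min_le_of_right_le (by linarith)

lemma triKernel_pow_integral (j : ℕ) :
    ∫ u in (0:ℝ)..1, triKernel u ^ j = 2 ^ j / (j + 1) := by
  have hint : ∀ a b : ℝ, IntervalIntegrable (fun u => triKernel u ^ j) volume a b :=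
    fun a b => ((triKernel_continuous.pow j)).intervalIntegrable a b
  have hsplit := intervalIntegral.integral_add_adjacent_intervals (a := (0:ℝ)) (b := 1/2)
    (c := 1) (hint 0 (1/2)) (hint (1/2) 1)
  have h1 : (∫ u in (0:ℝ)..(1/2), triKernel u ^ j) = 4^j * ((1/2)^(j+1)) / (j+1) := by
    rw [intervalIntegral.integral_congr (g := fun u => 4^j * u ^ j)
      (by intro u hu
          rw [Set.uIcc_of_le (by norm_num)] at hu
          have h0 := hu.1; have h2 := hu.2
          show triKernel u ^ j = 4^j * u^j
          rw [show triKernel u = 4 * u by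
            unfold triKernel
            rw [if_pos ⟨h0, by linarith⟩, min_eq_left (by linarith)], mul_pow])]
    rw [intervalIntegral.integral_const_mul, integral_pow]
    ring
  have h2 : (∫ u in (1/2:ℝ)..1, triKernel u ^ j) = 4^j * ((1/2)^(j+1)) / (j+1) := by
    rw [intervalIntegral.integral_congr (g := fun u => (fun y => 4^j * y ^ j) (1 - u))
      (by intro u hu
          rw [Set.uIcc_of_le (by norm_num)] at hu
          have h0 := hu.1; have h2 := hu.2
          show triKernel u ^ j = 4^j * (1-u)^j
          rw [show triKernel u = 4 * (1 - u) by
            unfold triKernel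
            rw [if_pos ⟨by linarith, h2⟩, min_eq_right (by linarith)], mul_pow])]
    rw [intervalIntegral.integral_comp_sub_left (fun y => (4:ℝ)^j * y ^ j) 1]
    norm_num
    try rw [intervalIntegral.integral_const_mul, integral_pow]
    ring
  rw [h1, h2] at hsplit
  rw [← hsplit]
  have hj : ((j:ℝ) + 1) ≠ 0 := by positivity
  have h4 : (4:ℝ)^j = 2^j * 2^j := by rw [show (4:ℝ) = 2*2 by norm_num, mul_pow]
  have h2p : ((1:ℝ)/2)^(j+1) = 1 / (2^j * 2) := by
    rw [div_pow, one_pow, pow_succ]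
  rw [h4, h2p]
  field_simp
  ring

lemma cell_integral (a t h : ℝ) (hh : 0 < h) (p k : ℕ) :
    (∫ x in ((k:ℝ)*h)..(((k:ℝ)+1)*h), (a + t * triKernel ((x - (k:ℝ)*h)/h)) ^ p)
      = h * ∑ j ∈ Finset.range (p+1), (p.choose j : ℝ) * a^(p-j) * t^j * (2^j/((j:ℝ)+1)) := by
  have step1 : (∫ x in ((k:ℝ)*h)..(((k:ℝ)+1)*h), (a + t * triKernel ((x - (k:ℝ)*h)/h)) ^ p)
      = ∫ x in (0:ℝ)..h, (a + t * triKernel (x/h)) ^ p := by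
    rw [intervalIntegral.integral_comp_sub_right (fun y => (a + t * triKernel (y/h))^p) ((k:ℝ)*h)]
    norm_num
    rw [show ((k:ℝ)+1)*h - (k:ℝ)*h = h by ring]
  rw [step1, intervalIntegral.integral_comp_div (fun y => (a + t * triKernel y)^p) hh.ne']
  rw [zero_div, div_self hh.ne', smul_eq_mul]
  congr 1
  have expand : ∀ u : ℝ, (a + t * triKernel u)^p
      = ∑ j ∈ Finset.range (p+1), ((p.choose j : ℝ) * a^(p-j) * t^j) * triKernel u ^ j := by
    intro u
    rw [add_comm, add_pow]
    apply Finset.sum_congr rfl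
    intro j hj
    rw [mul_pow]; ring
  simp_rw [expand]
  rw [intervalIntegral.integral_finset_sum]
  · apply Finset.sum_congr rfl
    intro j hj
    rw [intervalIntegral.integral_const_mul, triKernel_pow_integral]
  · intro j hj
    exact (continuous_const.mul (triKernel_continuous.pow j)).intervalIntegrable 0 1

/-- Binomial expansion of ∫_0^1 (a + g_θ(x))^p dx − a^p for the prior functions g_θ. -/
theorem integral_shift_gtheta_pow (m : ℕ) (hm : 1 ≤ m) (c R β a : ℝ) (p : ℕ)
    (hc : 0 < c) (hR : 0 < R) (hβ0 : 0 < β) (hβ1 : β ≤ 1) (ha : 0 < a) (hp : 1 ≤ p)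
    (θ : Fin m → ℝ) (hθ : ∀ k, θ k = 0 ∨ θ k = 1) :
    (∫ x in Set.Icc (0:ℝ) 1,
        (a + ∑ k : Fin m, θ k * (c * R * ((1:ℝ)/m) ^ β *
          triKernel ((x - (k : ℕ) * ((1:ℝ)/m)) / ((1:ℝ)/m)))) ^ (p : ℕ)) - a ^ (p : ℕ) =
      (∑ k : Fin m, θ k) *
        ∑ j ∈ Finset.Icc 1 p, (p.choose j : ℝ) * a ^ (p - j) * (c * R) ^ j *
          ((1:ℝ)/m) ^ (β * j + 1) * ((2:ℝ) ^ j / (j + 1)) := by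
  have hm0 : (0:ℝ) < m := by exact_mod_cast hm
  set h : ℝ := (1:ℝ)/m with hdef
  have hh : 0 < h := by positivity
  set G : ℝ → ℝ := fun x => (a + ∑ k : Fin m, θ k * (c * R * h ^ β *
          triKernel ((x - (k : ℕ) * h) / h))) ^ p with hG
  have hGc : Continuous G := by
    apply Continuous.pow
    apply continuous_const.add
    apply continuous_finset_sum
    intro k _
    exact continuous_const.mul (continuous_const.mul
      (triKernel_continuous.comp ((continuous_id.sub continuous_const).div_const h)))
  -- split into cells
  have hicc : (∫ x in Set.Icc (0:ℝ) 1, G x) = ∫ x in (0:ℝ)..1, G x := by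
    rw [intervalIntegral.integral_of_le (by norm_num : (0:ℝ) ≤ 1),
      integral_Icc_eq_integral_Ioc]
  have hadj : (∫ x in (0:ℝ)..1, G x)
      = ∑ i : Fin m, ∫ x in (((i:ℕ):ℝ)*h)..((((i:ℕ):ℝ)+1)*h), G x := by
    have H := intervalIntegral.sum_integral_adjacent_intervals (f := G) (μ := volume)
      (a := fun i : ℕ => (i:ℝ)*h) (n := m) (fun i _ => hGc.intervalIntegrable _ _)
    simp only [Nat.cast_zero, zero_mul] at H
    push_cast at H
    rw [Fin.sum_univ_eq_sum_range (fun i : ℕ => ∫ x in ((i:ℝ)*h)..(((i:ℝ)+1)*h), G x) m, H,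
      show ((m:ℝ))*h = 1 from by rw [hdef]; field_simp]
  -- evaluate each cell
  have hcell : ∀ i : Fin m, (∫ x in (((i:ℕ):ℝ)*h)..((((i:ℕ):ℝ)+1)*h), G x)
      = h * ∑ j ∈ Finset.range (p+1), (p.choose j : ℝ) * a^(p-j)
          * (θ i * (c*R*h^β))^j * ((2:ℝ)^j/((j:ℝ)+1)) := by
    intro i
    rw [intervalIntegral.integral_congr
      (g := fun x => (a + (θ i * (c*R*h^β)) * triKernel ((x - ((i:ℕ):ℝ)*h)/h))^p)]
    · exact cell_integral a _ h hh p i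
    · intro x hx
      rw [Set.uIcc_of_le (by nlinarith : ((i:ℕ):ℝ)*h ≤ (((i:ℕ):ℝ)+1)*h)] at hx
      obtain ⟨hx1, hx2⟩ := hx
      show (a + ∑ k : Fin m, θ k * (c * R * h ^ β *
          triKernel ((x - (k : ℕ) * h) / h))) ^ p = _
      congr 2
      rw [Finset.sum_eq_single i]
      · ring
      · intro k _ hk
        have hki : (k:ℕ) ≠ (i:ℕ) := fun e => hk (Fin.ext e)
        rcases lt_or_gt_of_ne hki with hlt | hgt
        · have h1 : ((k:ℕ):ℝ) + 1 ≤ ((i:ℕ):ℝ) := by exact_mod_cast hlt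
          have : (1:ℝ) ≤ (x - (k:ℕ)*h)/h := by
            rw [le_div_iff₀ hh]; nlinarith
          rw [triKernel_of_one_le this]; ring
        · have h1 : ((i:ℕ):ℝ) + 1 ≤ ((k:ℕ):ℝ) := by exact_mod_cast hgt
          have : (x - (k:ℕ)*h)/h ≤ 0 :=
            div_nonpos_of_nonpos_of_nonneg (by nlinarith) hh.le
          rw [triKernel_of_nonpos this]; ring
      · intro hi; exact absurd (Finset.mem_univ i) hi
  -- algebra
  have hrange : Finset.range (p+1) = insert 0 (Finset.Icc 1 p) := by
    ext j; simp only [Finset.mem_range, Finset.mem_insert, Finset.mem_Icc]; omega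
  have hpow : ∀ j : ℕ, h * (h ^ β)^j = h ^ (β * (j:ℝ) + 1) := by
    intro j
    rw [← Real.rpow_natCast (h ^ β) j, ← Real.rpow_mul hh.le,
      Real.rpow_add hh, Real.rpow_one, mul_comm]
  have hinner : ∀ t : ℝ,
      (h * ∑ j ∈ Finset.range (p+1), (p.choose j : ℝ) * a^(p-j) * t^j * ((2:ℝ)^j/((j:ℝ)+1)))
      = h * a^p + ∑ j ∈ Finset.Icc 1 p,
          h * ((p.choose j : ℝ) * a^(p-j) * t^j * ((2:ℝ)^j/((j:ℝ)+1))) := by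
    intro t
    rw [hrange, Finset.sum_insert (by simp), mul_add, Finset.mul_sum]
    norm_num
  have hkey : ∀ i : Fin m,
      (∑ j ∈ Finset.Icc 1 p, h * ((p.choose j : ℝ) * a^(p-j) * (θ i * (c*R*h^β))^j * ((2:ℝ)^j/((j:ℝ)+1))))
      = θ i * ∑ j ∈ Finset.Icc 1 p, (p.choose j : ℝ) * a^(p-j) * (c*R)^j
          * h^(β*(j:ℝ)+1) * ((2:ℝ)^j/((j:ℝ)+1)) := by
    intro i
    rw [Finset.mul_sum]
    apply Finset.sum_congr rfl
    intro j hj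
    have hj1 : 1 ≤ j := (Finset.mem_Icc.mp hj).1
    have hθi : (θ i)^j = θ i := by
      rcases hθ i with h0 | h0 <;> simp [h0, zero_pow (by omega : j ≠ 0)]
    rw [mul_pow, hθi, mul_pow (c*R), ← hpow j]
    ring
  rw [hicc, hadj]
  simp_rw [hcell, hinner]
  rw [Finset.sum_congr rfl (fun x _ => by rw [hkey x] :
    ∀ x ∈ Finset.univ, (h * a ^ p + ∑ j ∈ Finset.Icc 1 p,
      h * ((p.choose j : ℝ) * a ^ (p - j) * (θ x * (c * R * h ^ β)) ^ j * ((2:ℝ) ^ j / ((j:ℝ) + 1))))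
      = h * a ^ p + θ x * ∑ j ∈ Finset.Icc 1 p, (p.choose j : ℝ) * a ^ (p - j) * (c * R) ^ j
          * h ^ (β * (j:ℝ) + 1) * ((2:ℝ) ^ j / ((j:ℝ) + 1)))]
  rw [Finset.sum_add_distrib, Finset.sum_const, Finset.card_univ, Fintype.card_fin,
    nsmul_eq_mul, ← Finset.sum_mul]
  rw [show (m:ℝ) * (h * a^p) = a^p from by rw [hdef]; field_simp]
  ring
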